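/- arXiv:1103.2165 — 2 statements merged into one kernel-verified Lean document; each statement's English description precedes it below -/
import Mathlib

section
/- For a satisfiable CNF formula F, a satisfying assignment α, and a literal l ∈ α, the output-probability satisfies p(F^{[l]}, α) ≥ p(F, α); moreover if l is over a frozen variable then p(F^{[l]}, α) = p(F, α). -/
attribute [local instance] Classical.propDecidable

noncomputable section

structure CNF where
  clauses : Finset (Finset (ℕ × Bool))
  vars : Finset ℕ

def litSat (α : ℕ → Bool) (l : ℕ × Bool) : Prop := α l.1 = l.2

def clauseSat (α : ℕ → Bool) (C : Finset (ℕ × Bool)) : Prop := ∃ l ∈ C, litSat α l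

def Sat (F : CNF) (α : ℕ → Bool) : Prop := ∀ C ∈ F.clauses, clauseSat α C

def CNF.Satisfiable (F : CNF) : Prop := ∃ α, Sat F α

/-- Restrict `F` by the literal `l` (set the variable of `l` so that `l` is true). -/
def restrict (F : CNF) (l : ℕ × Bool) : CNF :=
  ⟨(F.clauses.filter (fun C => l ∉ C)).image (fun C => C.filter (fun m => m ≠ (l.1, !l.2))),
   F.vars.erase l.1⟩

/-- A variable is frozen if all satisfying assignments agree on it. -/
def Frozen (F : CNF) (x : ℕ) : Prop :=
  x ∈ F.vars ∧ ∀ α β, Sat F α → Sat F β → α x = β x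

/-- Satisfying literals: literals over the variables whose restriction stays satisfiable. -/
def SL (F : CNF) : Finset (ℕ × Bool) :=
  (F.vars ×ˢ ({true, false} : Finset Bool)).filter (fun l => (restrict F l).Satisfiable)

/-- Probability that `AssignSatisfiableLiterals` outputs `α` (with fuel). -/
def prAux : ℕ → CNF → (ℕ → Bool) → ℝ
  | 0, _, _ => 1
  | n+1, F, α =>
    if F.vars = ∅ then 1
    else ((SL F).card : ℝ)⁻¹ *
      ∑ l ∈ (SL F).filter (fun l => litSat α l), prAux n (restrict F l) α

def pr (F : CNF) (α : ℕ → Bool) : ℝ := prAux F.vars.card F α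

/-- A literal is `s`-implied if it is implied by at most `s` clauses of `F`. -/
def sImplied (F : CNF) (s : ℕ) (l : ℕ × Bool) : Prop :=
  ∃ G : Finset (Finset (ℕ × Bool)), G ⊆ F.clauses ∧ G.card ≤ s ∧
    ∀ α : ℕ → Bool, (∀ C ∈ G, clauseSat α C) → litSat α l

def ImplicationFree (F : CNF) (s : ℕ) : Prop :=
  ∀ l : ℕ × Bool, l.1 ∈ F.vars → ¬ sImplied F s l

def impliedVars (F : CNF) (s : ℕ) : Finset ℕ :=
  F.vars.filter (fun x => sImplied F s (x, true) ∨ sImplied F s (x, false))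

def impliedVal (F : CNF) (s : ℕ) (x : ℕ) : Bool :=
  if sImplied F s (x, true) then true else false

def closureAux (s : ℕ) : ℕ → CNF → CNF
  | 0, F => F
  | n+1, F =>
    if h : (impliedVars F s).Nonempty then
      closureAux s n (restrict F ((impliedVars F s).min' h, impliedVal F s ((impliedVars F s).min' h)))
    else F

/-- Repeatedly fix all `s`-implied literals. -/
def pclosure (s : ℕ) (F : CNF) : CNF := closureAux s F.vars.card F

/-- `x` is guessed in the run of PPSZ with assignment `β` and permutation `π`. -/
def Guessed (s : ℕ) (β : ℕ → Bool) (x : ℕ) : CNF → List ℕ → Prop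
  | _, [] => False
  | F, y :: π =>
    if x ∉ (pclosure s F).vars then False
    else if y = x then True
    else Guessed s β x
      (if y ∈ (pclosure s F).vars then restrict (pclosure s F) (y, β y) else pclosure s F) π

/-- Probability over a uniformly random permutation of the variables that `x` is guessed. -/
def Pguessed (s : ℕ) (F : CNF) (x : ℕ) (α : ℕ → Bool) : ℝ :=
  ((F.vars.toList.permutations.countP (fun π => decide (Guessed s α x F π))) : ℝ) /
    (Nat.factorial F.vars.card)

/-- The final restricted formula of a PPSZ run. -/
def runPPSZ (s : ℕ) (β : ℕ → Bool) : CNF → List ℕ → CNF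
  | F, [] => pclosure s F
  | F, y :: π =>
    runPPSZ s β
      (if y ∈ (pclosure s F).vars then restrict (pclosure s F) (y, β y) else pclosure s F) π

/-- Success probability of PPSZ over uniform `β` and uniform permutation. -/
def psuccess (s : ℕ) (F : CNF) : ℝ :=
  (∑ b ∈ F.vars.powerset,
    ((F.vars.toList.permutations.countP
      (fun π => decide ((runPPSZ s (fun y => decide (y ∈ b)) F π).clauses = ∅))) : ℝ)) /
  (2 ^ F.vars.card * Nat.factorial F.vars.card)

def asg (b : Finset ℕ) : ℕ → Bool := fun y => decide (y ∈ b)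

/-- The satisfying assignments of `F`, encoded as subsets of the variable set. -/
def satAssignments (F : CNF) : Finset (Finset ℕ) :=
  F.vars.powerset.filter (fun b => Sat F (asg b))

/-- The PPSZ cost of variable `x` in `F`, with guessing bound `S`. -/
def cost (s : ℕ) (S : ℝ) (F : CNF) (x : ℕ) : ℝ :=
  if x ∉ F.vars then 0
  else if Frozen F x then
    ∑ b ∈ satAssignments F, pr F (asg b) * Pguessed s F x (asg b)
  else S

def totalCost (s : ℕ) (S : ℝ) (F : CNF) : ℝ := ∑ x ∈ F.vars, cost s S F x



lemma CNF.ext' {F G : CNF} (h1 : F.clauses = G.clauses) (h2 : F.vars = G.vars) : F = G := by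
  cases F; cases G; simp_all

lemma restrict_vars (F : CNF) (l : ℕ × Bool) : (restrict F l).vars = F.vars.erase l.1 := rfl

lemma sat_restrict {F : CNF} {β : ℕ → Bool} {l : ℕ × Bool} (h : Sat F β) (hl : litSat β l) :
    Sat (restrict F l) β := by
  intro C hC
  simp only [restrict, Finset.mem_image, Finset.mem_filter] at hC
  obtain ⟨D, ⟨hD, hlD⟩, rfl⟩ := hC
  obtain ⟨m, hm, hmsat⟩ := h D hD
  refine ⟨m, ?_, hmsat⟩
  simp only [Finset.mem_filter]
  refine ⟨hm, ?_⟩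
  rintro rfl
  simp only [litSat] at hmsat hl
  rw [hl] at hmsat
  simp at hmsat

lemma restrict_sat {F : CNF} {β : ℕ → Bool} {l : ℕ × Bool}
    (h : Sat (restrict F l) β) : Sat F (Function.update β l.1 l.2) := by
  intro C hC
  by_cases hlC : l ∈ C
  · exact ⟨l, hlC, by simp [litSat]⟩
  · obtain ⟨m, hm, hms⟩ := h (C.filter (fun m => m ≠ (l.1, !l.2)))
      (by simp only [restrict, Finset.mem_image, Finset.mem_filter]; exact ⟨C, ⟨hC, hlC⟩, rfl⟩)
    simp only [Finset.mem_filter] at hm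
    refine ⟨m, hm.1, ?_⟩
    by_cases hx : m.1 = l.1
    · have hm2 : m.2 = l.2 := by
        have := hm.2
        cases m with
        | mk a b =>
          simp only at hx
          subst hx
          cases b <;> cases hb : l.2 <;> simp_all
      simp only [litSat]
      rw [hx, hm2, Function.update_self]
    · simpa [litSat, Function.update_of_ne hx] using hms

lemma restrict_comm (F : CNF) {l m : ℕ × Bool} (h : l.1 ≠ m.1) :
    restrict (restrict F l) m = restrict (restrict F m) l := by
  have key : ∀ (l m : ℕ × Bool), l.1 ≠ m.1 → (restrict (restrict F l) m).clauses =
      (F.clauses.filter (fun C => l ∉ C ∧ m ∉ C)).image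
        (fun C => C.filter (fun a => a ≠ (l.1, !l.2) ∧ a ≠ (m.1, !m.2))) := by
    intro l m h
    ext D
    simp only [restrict, Finset.mem_image, Finset.mem_filter]
    constructor
    · rintro ⟨C', ⟨⟨C, ⟨hC, hlC⟩, rfl⟩, hmC'⟩, rfl⟩
      refine ⟨C, ⟨hC, hlC, ?_⟩, ?_⟩
      · intro hmC
        exact hmC' (Finset.mem_filter.2 ⟨hmC, by
          intro he; exact h (by rw [he])⟩)
      · rw [Finset.filter_filter]
    · rintro ⟨C, ⟨hC, hlC, hmC⟩, rfl⟩
      refine ⟨C.filter (fun a => a ≠ (l.1, !l.2)), ⟨⟨C, ⟨hC, hlC⟩, rfl⟩, ?_⟩, ?_⟩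
      · intro hm'
        exact hmC (Finset.mem_filter.1 hm').1
      · rw [Finset.filter_filter]
  have c1 := key l m h
  have c2 := key m l h.symm
  apply CNF.ext'
  · rw [c1, c2]
    ext D
    simp only [Finset.mem_image, Finset.mem_filter]
    constructor
    · rintro ⟨C, ⟨hC, h1, h2⟩, rfl⟩
      exact ⟨C, ⟨hC, h2, h1⟩, by ext a; simp only [Finset.mem_filter]; tauto⟩
    · rintro ⟨C, ⟨hC, h1, h2⟩, rfl⟩
      exact ⟨C, ⟨hC, h2, h1⟩, by ext a; simp only [Finset.mem_filter]; tauto⟩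
  · simp only [restrict_vars]
    exact Finset.erase_right_comm

lemma mem_SL {F : CNF} {m : ℕ × Bool} :
    m ∈ SL F ↔ m.1 ∈ F.vars ∧ (restrict F m).Satisfiable := by
  simp only [SL, Finset.mem_filter, Finset.mem_product, Finset.mem_insert, Finset.mem_singleton]
  constructor
  · rintro ⟨⟨h1, _⟩, h2⟩; exact ⟨h1, h2⟩
  · rintro ⟨h1, h2⟩; exact ⟨⟨h1, by cases m.2 <;> simp⟩, h2⟩

lemma filter_SL {F : CNF} {α : ℕ → Bool} (hα : Sat F α) :
    (SL F).filter (fun l => litSat α l) = F.vars.image (fun y => (y, α y)) := by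
  ext m
  simp only [Finset.mem_filter, mem_SL, Finset.mem_image]
  constructor
  · rintro ⟨⟨h1, _⟩, h2⟩
    refine ⟨m.1, h1, ?_⟩
    simp only [litSat] at h2
    cases m with
    | mk a b => simp only at h2 ⊢; rw [h2]
  · rintro ⟨y, hy, rfl⟩
    exact ⟨⟨hy, ⟨α, sat_restrict hα rfl⟩⟩, rfl⟩

lemma prAux_nonneg : ∀ (n : ℕ) (F : CNF) (α : ℕ → Bool), 0 ≤ prAux n F α := by
  intro n
  induction n with
  | zero => intro F α; simp [prAux]
  | succ n ih =>
    intro F α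
    rw [prAux]
    split
    · norm_num
    · exact mul_nonneg (by positivity) (Finset.sum_nonneg fun l _ => ih _ _)

lemma pr_nonneg (F : CNF) (α : ℕ → Bool) : 0 ≤ pr F α := prAux_nonneg _ _ _

lemma pr_eq {F : CNF} (α : ℕ → Bool) (h : F.vars.Nonempty) :
    pr F α = ((SL F).card : ℝ)⁻¹ *
      ∑ l ∈ (SL F).filter (fun l => litSat α l), pr (restrict F l) α := by
  obtain ⟨k, hk⟩ : ∃ k, F.vars.card = k + 1 :=
    ⟨F.vars.card - 1, (Nat.succ_pred_eq_of_pos (Finset.card_pos.2 h)).symm⟩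
  rw [pr, hk, prAux, if_neg (by simpa [← Finset.card_eq_zero, hk] using Finset.nonempty_iff_ne_empty.1 h)]
  congr 1
  apply Finset.sum_congr rfl
  intro l hl
  have hl1 : l.1 ∈ F.vars := (mem_SL.1 (Finset.mem_filter.1 hl).1).1
  have : (restrict F l).vars.card = k := by
    rw [restrict_vars, Finset.card_erase_of_mem hl1, hk]
    omega
  rw [pr, this]

lemma pr_empty {F : CNF} (α : ℕ → Bool) (h : F.vars = ∅) : pr F α = 1 := by
  rw [pr, h]
  simp [prAux]

lemma hfr_notmem {F : CNF} {α : ℕ → Bool} (hα : Sat F α) {x : ℕ} (hfr : Frozen F x) :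
    (x, !(α x)) ∉ SL F := by
  intro hm
  obtain ⟨-, β, hβ⟩ := mem_SL.1 hm
  have h1 := restrict_sat hβ
  have h2 := hfr.2 _ α h1 hα
  simp [Function.update_self] at h2

lemma hfr_SL {F : CNF} {α : ℕ → Bool} (hα : Sat F α) {x : ℕ} (hfr : Frozen F x)
    (hlSL : (x, α x) ∈ SL F) (hsub : SL (restrict F (x, α x)) ⊆ SL F) :
    SL F = insert (x, α x) (SL (restrict F (x, α x))) := by
  apply Finset.Subset.antisymm
  · intro m hm
    rcases mem_SL.1 hm with ⟨hm1, β, hβ⟩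
    by_cases hmx : m.1 = x
    · have hmeq : m = (x, α x) := by
        obtain ⟨a, b⟩ := m
        simp only at hmx
        subst hmx
        by_contra hne2
        have hb : b = !(α a) := by
          cases b <;> cases h : α a <;> simp_all
        subst hb
        exact hfr_notmem hα hfr hm
      rw [hmeq]
      exact Finset.mem_insert_self _ _
    · apply Finset.mem_insert_of_mem
      rw [mem_SL, restrict_vars]
      refine ⟨Finset.mem_erase.2 ⟨hmx, hm1⟩, ?_⟩
      have hγ : Sat F (Function.update β m.1 m.2) := restrict_sat hβ
      have hγx : (Function.update β m.1 m.2) x = α x := hfr.2 _ α hγ hα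
      exact ⟨Function.update β m.1 m.2,
        sat_restrict (sat_restrict hγ hγx) (Function.update_self _ _ _)⟩
  · exact Finset.insert_subset hlSL hsub

lemma pr_main (α : ℕ → Bool) : ∀ (n : ℕ) (F : CNF), F.vars.card = n → Sat F α →
    ∀ x ∈ F.vars,
    pr F α ≤ pr (restrict F (x, α x)) α ∧
      (Frozen F x → pr (restrict F (x, α x)) α = pr F α) := by
  intro n
  induction n using Nat.strong_induction_on with
  | _ n IH =>
  intro F hcard hα x hx
  have hαl : litSat α (x, α x) := rfl
  have hα' : Sat (restrict F (x, α x)) α := sat_restrict hα hαl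
  have hA : (SL F).filter (fun m => litSat α m) = F.vars.image (fun y => (y, α y)) :=
    filter_SL hα
  have hlA : (x, α x) ∈ (SL F).filter (fun m => litSat α m) := by
    rw [hA]; exact Finset.mem_image.2 ⟨x, hx, rfl⟩
  have hlSL : (x, α x) ∈ SL F := (Finset.mem_filter.1 hlA).1
  have hsub : SL (restrict F (x, α x)) ⊆ SL F := by
    intro m hm
    rw [mem_SL] at hm ⊢
    obtain ⟨hm1, β, hβ⟩ := hm
    rw [restrict_vars, Finset.mem_erase] at hm1
    refine ⟨hm1.2, ?_⟩
    rw [restrict_comm F (show (x, α x).1 ≠ m.1 from fun h => hm1.1 h.symm)] at hβ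
    exact ⟨_, restrict_sat hβ⟩
  have hlnot : (x, α x) ∉ SL (restrict F (x, α x)) := by
    intro hm
    have := (mem_SL.1 hm).1
    rw [restrict_vars] at this
    exact absurd this (Finset.notMem_erase _ _)
  have hcard_le : (SL (restrict F (x, α x))).card + 1 ≤ (SL F).card := by
    have h := Finset.card_le_card (Finset.insert_subset hlSL hsub)
    rwa [Finset.card_insert_of_notMem hlnot] at h
  have hinj : Function.Injective (fun y : ℕ => (y, α y)) := fun a b h => congrArg Prod.fst h
  have hA' : (SL (restrict F (x, α x))).filter (fun m => litSat α m)
      = (F.vars.erase x).image (fun y => (y, α y)) := by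
    rw [filter_SL hα', restrict_vars]
  have hAerase : ((SL F).filter (fun m => litSat α m)).erase (x, α x)
      = (SL (restrict F (x, α x))).filter (fun m => litSat α m) := by
    rw [hA, hA', ← Finset.image_erase hinj]
  have hvarsne : F.vars.Nonempty := ⟨x, hx⟩
  have hnpos : 0 < n := hcard ▸ Finset.card_pos.2 hvarsne
  have hprF : pr F α = ((SL F).card : ℝ)⁻¹ *
      ∑ m ∈ (SL F).filter (fun m => litSat α m), pr (restrict F m) α := pr_eq α hvarsne
  have hsplit : ∑ m ∈ (SL F).filter (fun m => litSat α m), pr (restrict F m) α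
      = pr (restrict F (x, α x)) α +
        ∑ m ∈ ((SL F).filter (fun m => litSat α m)).erase (x, α x), pr (restrict F m) α :=
    (Finset.add_sum_erase _ _ hlA).symm
  -- termwise comparison on the erased sum
  have hterm : ∀ m ∈ ((SL F).filter (fun m => litSat α m)).erase (x, α x),
      (pr (restrict F m) α ≤ pr (restrict (restrict F (x, α x)) m) α ∧
        (Frozen F x → pr (restrict F m) α = pr (restrict (restrict F (x, α x)) m) α)) := by
    intro m hm
    rw [hAerase, hA'] at hm
    obtain ⟨y, hy, rfl⟩ := Finset.mem_image.1 hm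
    rw [Finset.mem_erase] at hy
    obtain ⟨hyx, hyF⟩ := hy
    have hcardm : (restrict F (y, α y)).vars.card = n - 1 := by
      rw [restrict_vars, Finset.card_erase_of_mem hyF, hcard]
    have hxm : x ∈ (restrict F (y, α y)).vars := by
      rw [restrict_vars]
      exact Finset.mem_erase.2 ⟨fun h => hyx h.symm, hx⟩
    have hIH := IH (n - 1) (by omega) (restrict F (y, α y)) hcardm
      (sat_restrict hα rfl) x hxm
    have hcomm : restrict (restrict F (y, α y)) (x, α x)
        = restrict (restrict F (x, α x)) (y, α y) :=
      restrict_comm F (show ((y, α y) : ℕ × Bool).1 ≠ ((x, α x) : ℕ × Bool).1 from hyx)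
    rw [hcomm] at hIH
    refine ⟨hIH.1, fun hfr => (hIH.2 ?_).symm⟩
    -- Frozen (restrict F (y, α y)) x
    refine ⟨hxm, fun γ δ hγ hδ => ?_⟩
    have hγ' := restrict_sat hγ
    have hδ' := restrict_sat hδ
    have h := hfr.2 _ _ hγ' hδ'
    rwa [Function.update_of_ne (fun h => hyx h.symm), Function.update_of_ne (fun h => hyx h.symm)] at h
  by_cases hemp : (restrict F (x, α x)).vars = ∅
  · -- F.vars = {x}
    have hP : pr (restrict F (x, α x)) α = 1 := pr_empty α hemp
    have hSL'empty : SL (restrict F (x, α x)) = ∅ := by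
      apply Finset.eq_empty_of_forall_notMem
      intro m hm
      have := (mem_SL.1 hm).1
      rw [hemp] at this
      exact absurd this (Finset.notMem_empty _)
    have herase_empty : ((SL F).filter (fun m => litSat α m)).erase (x, α x) = ∅ := by
      rw [hAerase, hSL'empty]
      simp
    have hprF2 : pr F α = ((SL F).card : ℝ)⁻¹ := by
      rw [hprF, hsplit, herase_empty, Finset.sum_empty, add_zero, hP, mul_one]
    have hs1 : 1 ≤ (SL F).card := Finset.card_pos.2 ⟨_, hlSL⟩
    constructor
    · rw [hprF2, hP]
      have h1 : (1:ℝ) ≤ ((SL F).card : ℝ) := by exact_mod_cast hs1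
      exact inv_le_one_of_one_le₀ h1
    · intro hfr
      have hSLcard : (SL F).card = 1 := by
        rw [hfr_SL hα hfr hlSL hsub, Finset.card_insert_of_notMem hlnot, hSL'empty]
        simp
      rw [hprF2, hP, hSLcard]
      norm_num
  · have hne' : (restrict F (x, α x)).vars.Nonempty := Finset.nonempty_iff_ne_empty.2 hemp
    have hprF' : pr (restrict F (x, α x)) α = (((SL (restrict F (x, α x))).card : ℝ))⁻¹ *
        ∑ m ∈ (SL (restrict F (x, α x))).filter (fun m => litSat α m),
          pr (restrict (restrict F (x, α x)) m) α := pr_eq α hne'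
    have hs'pos : 0 < (SL (restrict F (x, α x))).card := by
      apply Finset.card_pos.2
      obtain ⟨z, hz⟩ := hne'
      refine ⟨(z, α z), ?_⟩
      have : (z, α z) ∈ (SL (restrict F (x, α x))).filter (fun m => litSat α m) := by
        rw [hA']
        rw [restrict_vars] at hz
        exact Finset.mem_image.2 ⟨z, hz, rfl⟩
      exact (Finset.mem_filter.1 this).1
    have hs'ne : ((SL (restrict F (x, α x))).card : ℝ) ≠ 0 := Nat.cast_ne_zero.2 hs'pos.ne'
    have hsum' : ∑ m ∈ (SL (restrict F (x, α x))).filter (fun m => litSat α m),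
        pr (restrict (restrict F (x, α x)) m) α
        = ((SL (restrict F (x, α x))).card : ℝ) * pr (restrict F (x, α x)) α := by
      rw [hprF', ← mul_assoc, mul_inv_cancel₀ hs'ne, one_mul]
    have hP0 : 0 ≤ pr (restrict F (x, α x)) α := pr_nonneg _ _
    have hSpos : (0:ℝ) < ((SL F).card : ℝ) := by
      have : 0 < (SL F).card := Finset.card_pos.2 ⟨_, hlSL⟩
      exact_mod_cast this
    have hle : ((SL (restrict F (x, α x))).card : ℝ) + 1 ≤ ((SL F).card : ℝ) := by
      exact_mod_cast hcard_le
    constructor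
    · have hsumle : ∑ m ∈ ((SL F).filter (fun m => litSat α m)).erase (x, α x),
          pr (restrict F m) α
          ≤ ((SL (restrict F (x, α x))).card : ℝ) * pr (restrict F (x, α x)) α := by
        rw [← hsum', ← hAerase]
        exact Finset.sum_le_sum (fun m hm => (hterm m hm).1)
      rw [hprF, hsplit]
      calc ((SL F).card : ℝ)⁻¹ * (pr (restrict F (x, α x)) α +
            ∑ m ∈ ((SL F).filter (fun m => litSat α m)).erase (x, α x), pr (restrict F m) α)
          ≤ ((SL F).card : ℝ)⁻¹ * (((SL F).card : ℝ) * pr (restrict F (x, α x)) α) := by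
            apply mul_le_mul_of_nonneg_left _ (inv_nonneg.2 (Nat.cast_nonneg _))
            nlinarith
        _ = pr (restrict F (x, α x)) α := by
            rw [← mul_assoc, inv_mul_cancel₀ hSpos.ne', one_mul]
    · intro hfr
      have hScard : ((SL F).card : ℝ) = ((SL (restrict F (x, α x))).card : ℝ) + 1 := by
        have : (SL F).card = (SL (restrict F (x, α x))).card + 1 := by
          rw [hfr_SL hα hfr hlSL hsub, Finset.card_insert_of_notMem hlnot]
        exact_mod_cast this
      have hsumeq : ∑ m ∈ ((SL F).filter (fun m => litSat α m)).erase (x, α x),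
          pr (restrict F m) α
          = ((SL (restrict F (x, α x))).card : ℝ) * pr (restrict F (x, α x)) α := by
        rw [← hsum', ← hAerase]
        exact Finset.sum_congr rfl (fun m hm => (hterm m hm).2 hfr)
      rw [hprF, hsplit, hsumeq, hScard]
      rw [show ∀ a b : ℝ, a + b * a = (b + 1) * a from fun a b => by ring, ← mul_assoc,
        inv_mul_cancel₀ (by rw [← hScard]; exact hSpos.ne'), one_mul]

/-- For `l ∈ α`, `p(F^{[l]}, α) ≥ p(F, α)`, with equality for frozen variables. -/
theorem pr_restrict_ge (F : CNF) (α : ℕ → Bool) (x : ℕ) (hF : F.Satisfiable)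
    (hα : Sat F α) (hx : x ∈ F.vars) :
    pr F α ≤ pr (restrict F (x, α x)) α ∧
      (Frozen F x → pr (restrict F (x, α x)) α = pr F α) := by
  exact pr_main α F.vars.card F rfl hα x hx

end
end

section
/- Key exponent inequality: let n ≥ 1, n_N, n_C ≥ 0 be integers with n = n_N + n_C, let M = 2n_N + n_C, and let S ∈ [2 ln 2 − 1, 1]. Then log₂(M/(2n)) + n_N·(2S/M) + n_C·(1/M) ≥ 0. -/
/-- Key exponent inequality: for `n = n_N + n_C ≥ 1`, `M = 2n_N + n_C` and
`S ∈ [2 ln 2 - 1, 1]`, `log₂(M/(2n)) + n_N·(2S/M) + n_C·(1/M) ≥ 0`. -/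
theorem exponent_inequality (n nN nC : ℕ) (S : ℝ) (hn : 1 ≤ n) (hsum : n = nN + nC)
    (hS0 : 2 * Real.log 2 - 1 ≤ S) (hS1 : S ≤ 1) :
    Real.logb 2 (((2 * nN + nC : ℕ) : ℝ) / (2 * (n : ℝ)))
      + (nN : ℝ) * (2 * S / ((2 * nN + nC : ℕ) : ℝ))
      + (nC : ℝ) * (1 / ((2 * nN + nC : ℕ) : ℝ)) ≥ 0 := by
  have hL : (0:ℝ) < Real.log 2 := Real.log_pos (by norm_num)
  set L := Real.log 2 with hLdef
  have hNpos : (0:ℝ) < (n:ℝ) := by exact_mod_cast hn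
  set A := (nN:ℝ) with hA
  set C := (nC:ℝ) with hC
  have hA0 : 0 ≤ A := Nat.cast_nonneg _
  have hC0 : 0 ≤ C := Nat.cast_nonneg _
  have hMcast : ((2 * nN + nC : ℕ) : ℝ) = 2 * A + C := by push_cast; ring
  have hnr : (n:ℝ) = A + C := by rw [hsum]; push_cast; ring
  have hM : (0:ℝ) < 2*A + C := by nlinarith
  rw [hMcast]
  -- logarithm lower bound: log(M/(2n)) ≥ A/M - log 2
  have hlog1 : Real.log ((n:ℝ) / (2*A+C)) ≤ (n:ℝ)/(2*A+C) - 1 :=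
    Real.log_le_sub_one_of_pos (by positivity)
  have hlogdiv : Real.log ((n:ℝ)/(2*A+C)) = Real.log (n:ℝ) - Real.log (2*A+C) :=
    Real.log_div (ne_of_gt hNpos) (ne_of_gt hM)
  have hkey : Real.log ((2*A+C) / (2*(n:ℝ))) ≥ A/(2*A+C) - L := by
    rw [Real.log_div (ne_of_gt hM) (by positivity),
        Real.log_mul (by norm_num) (ne_of_gt hNpos)]
    have heq : (n:ℝ)/(2*A+C) - 1 = -(A/(2*A+C)) := by
      field_simp
      nlinarith
    rw [hlogdiv, heq] at hlog1
    rw [← hLdef]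
    linarith
  have hlogb : Real.logb 2 ((2*A+C) / (2*(n:ℝ)))
      = Real.log ((2*A+C)/(2*(n:ℝ))) / L := rfl
  rw [hlogb]
  have hstep : Real.log ((2*A+C)/(2*(n:ℝ))) / L ≥ (A/(2*A+C) - L)/L := by
    exact div_le_div_of_nonneg_right hkey hL.le
  have hfinal : (A/(2*A+C) - L)/L + A * (2*S/(2*A+C)) + C * (1/(2*A+C)) ≥ 0 := by
    have hnum : A + L*(2*S*A + C) - (2*A+C)*L ≥ 0 := by
      nlinarith [sq_nonneg (2*L - 1), mul_nonneg hA0 (le_of_lt hL)]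
    have hrw : (A/(2*A+C) - L)/L + A * (2*S/(2*A+C)) + C * (1/(2*A+C))
        = (A + L*(2*S*A + C) - (2*A+C)*L) / ((2*A+C)*L) := by
      field_simp
      have hx : (A*2+C)*(A*2+C)⁻¹ = 1 := mul_inv_cancel₀ (by linarith)
      linear_combination L * hx
    rw [hrw]
    positivity
  linarith
end
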